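/- arXiv:1302.3268 — 4 statements merged into one kernel-verified Lean document; each statement's English description precedes it below -/
import Mathlib

section
/- Let Ω be a finite set with n ≥ 2 elements, let x* ∈ Ω, and let D_1, …, D_k be probability distributions on Ω such that D_i(x*) > D_i(x) for every crowd i and every option x ≠ x*. Then the induced gap f(μ) = ε(D_μ) is Lipschitz-continuous on the simplex with respect to the ℓ1 norm: for any two probability vectors μ, μ' ∈ ℝ^k, |f(μ) − f(μ')| ≤ n·‖μ − μ'‖_1, where ‖v‖_1 = ∑_i |v_i|. -/
/-- The *gap* of a distribution `D` on a finite set: the difference between the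
largest and the second-largest probability values, i.e.
`max_x (D x − max_{y ≠ x} D y)`. -/
noncomputable def gap {Ω : Type*} (D : Ω → ℝ) : ℝ :=
  ⨆ x, (D x - ⨆ y : {y : Ω // y ≠ x}, D (y : Ω))

lemma gap_lip {Ω : Type*} [Fintype Ω] (hn : 2 ≤ Fintype.card Ω)
    (E F : Ω → ℝ) (c : ℝ) (h : ∀ x, |E x - F x| ≤ c) :
    gap E ≤ gap F + 2 * c := by
  haveI : Nonempty Ω := Fintype.card_pos_iff.mp (by omega)
  have hne : ∀ x : Ω, Nonempty {y : Ω // y ≠ x} := by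
    intro x
    obtain ⟨y, hy⟩ := Fintype.exists_ne_of_one_lt_card (by omega) x
    exact ⟨⟨y, hy⟩⟩
  apply ciSup_le
  intro x
  haveI := hne x
  have hEF : ∀ z, E z ≤ F z + c := fun z => by
    have := (abs_le.mp (h z)).2; linarith
  have hFE : ∀ z, F z - c ≤ E z := fun z => by
    have := (abs_le.mp (h z)).1; linarith
  have bddE : BddAbove (Set.range fun y : {y : Ω // y ≠ x} => E (y : Ω)) :=
    Set.Finite.bddAbove (Set.finite_range _)
  have hsup : (⨆ y : {y : Ω // y ≠ x}, F (y : Ω)) - c ≤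
      ⨆ y : {y : Ω // y ≠ x}, E (y : Ω) := by
    rw [sub_le_iff_le_add]
    apply ciSup_le
    intro y
    have := le_ciSup bddE y
    linarith [hFE (y : Ω)]
  have hgapF : F x - (⨆ y : {y : Ω // y ≠ x}, F (y : Ω)) ≤ gap F := by
    apply le_ciSup (Set.Finite.bddAbove (Set.finite_range _)) x
  have := hEF x
  linarith

/-- **Claim 6.2(b).** The induced gap `f(μ) = ε(D_μ)` is Lipschitz-continuous
with respect to the `ℓ1` norm: `|f(μ) − f(μ')| ≤ n ‖μ − μ'‖₁`, where `n` is
the number of options. -/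
theorem stmt4 {Ω : Type*} [Fintype Ω] (hn : 2 ≤ Fintype.card Ω)
    (xstar : Ω) (k : ℕ) (D : Fin k → Ω → ℝ)
    (hD0 : ∀ i x, 0 ≤ D i x) (hD1 : ∀ i, ∑ x, D i x = 1)
    (hstar : ∀ i x, x ≠ xstar → D i xstar > D i x)
    (μ μ' : Fin k → ℝ) (hμ0 : ∀ i, 0 ≤ μ i) (hμ1 : ∑ i, μ i = 1)
    (hμ'0 : ∀ i, 0 ≤ μ' i) (hμ'1 : ∑ i, μ' i = 1) :
    |gap (fun x => ∑ i, μ i * D i x) - gap (fun x => ∑ i, μ' i * D i x)|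
      ≤ (Fintype.card Ω : ℝ) * ∑ i, |μ i - μ' i| := by
  set c := ∑ i, |μ i - μ' i| with hc
  have hc0 : 0 ≤ c := Finset.sum_nonneg fun i _ => abs_nonneg _
  have hDle1 : ∀ i x, D i x ≤ 1 := by
    intro i x
    rw [← hD1 i]
    exact Finset.single_le_sum (fun j _ => hD0 i j) (Finset.mem_univ x)
  have hpt : ∀ x, |(∑ i, μ i * D i x) - ∑ i, μ' i * D i x| ≤ c := by
    intro x
    rw [← Finset.sum_sub_distrib]
    calc |∑ i, (μ i * D i x - μ' i * D i x)| ≤ ∑ i, |μ i * D i x - μ' i * D i x| :=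
          Finset.abs_sum_le_sum_abs _ _
      _ ≤ c := by
          apply Finset.sum_le_sum
          intro i _
          rw [← sub_mul, abs_mul, abs_of_nonneg (hD0 i x)]
          calc |μ i - μ' i| * D i x ≤ |μ i - μ' i| * 1 :=
                mul_le_mul_of_nonneg_left (hDle1 i x) (abs_nonneg _)
            _ = |μ i - μ' i| := mul_one _
  have h1 := gap_lip hn _ _ c hpt
  have h2 := gap_lip hn _ _ c (fun x => by rw [abs_sub_comm]; exact hpt x)
  have h2c : 2 * c ≤ (Fintype.card Ω : ℝ) * c := by
    apply mul_le_mul_of_nonneg_right _ hc0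
    exact_mod_cast hn
  rw [abs_sub_le_iff]
  constructor <;> linarith
end

section
/- For every ε with 0 < ε ≤ 1/5 there exist two probability distributions D_1, D_2 on a three-element option set {x, y, z} such that the gap of each D_i equals ε, both D_1 and D_2 have x as their unique most probable option, and the uniform mixture D = (1/2)D_1 + (1/2)D_2 has gap at least 1/10. Concretely, one may take D_1 = (2/5+ε, 2/5, 1/5−ε) and D_2 = (2/5+ε, 1/5−ε, 2/5) (probabilities of x, y, z respectively), for which the mixture is (2/5+ε, 3/10−ε/2, 3/10−ε/2) and has gap 1/10 + 3ε/2 ≥ 1/10. -/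
section aux


lemma fin3_ciSup (f : Fin 3 → ℝ) : (⨆ x, f x) = max (f 0) (max (f 1) (f 2)) := by
  apply le_antisymm
  · apply ciSup_le
    intro x
    fin_cases x
    · exact le_max_left _ _
    · exact le_trans (le_max_left _ _) (le_max_right _ _)
    · exact le_trans (le_max_right _ _) (le_max_right _ _)
  · have hb : BddAbove (Set.range f) := Set.Finite.bddAbove (Set.finite_range f)
    exact max_le (le_ciSup hb 0) (max_le (le_ciSup hb 1) (le_ciSup hb 2))

lemma sup_ne0 (f : Fin 3 → ℝ) : (⨆ y : {y : Fin 3 // y ≠ 0}, f (y : Fin 3)) = max (f 1) (f 2) := by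
  haveI : Nonempty {y : Fin 3 // y ≠ 0} := ⟨⟨1, by decide⟩⟩
  apply le_antisymm
  · apply ciSup_le
    rintro ⟨y, hy⟩
    fin_cases y
    · exact absurd rfl hy
    · exact le_max_left _ _
    · exact le_max_right _ _
  · have hb : BddAbove (Set.range fun y : {y : Fin 3 // y ≠ 0} => f (y : Fin 3)) :=
      Set.Finite.bddAbove (Set.finite_range _)
    exact max_le (le_ciSup hb ⟨1, by decide⟩) (le_ciSup hb ⟨2, by decide⟩)

lemma sup_ne1 (f : Fin 3 → ℝ) : (⨆ y : {y : Fin 3 // y ≠ 1}, f (y : Fin 3)) = max (f 0) (f 2) := by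
  haveI : Nonempty {y : Fin 3 // y ≠ 1} := ⟨⟨0, by decide⟩⟩
  apply le_antisymm
  · apply ciSup_le
    rintro ⟨y, hy⟩
    fin_cases y
    · exact le_max_left _ _
    · exact absurd rfl hy
    · exact le_max_right _ _
  · have hb : BddAbove (Set.range fun y : {y : Fin 3 // y ≠ 1} => f (y : Fin 3)) :=
      Set.Finite.bddAbove (Set.finite_range _)
    exact max_le (le_ciSup hb ⟨0, by decide⟩) (le_ciSup hb ⟨2, by decide⟩)

lemma sup_ne2 (f : Fin 3 → ℝ) : (⨆ y : {y : Fin 3 // y ≠ 2}, f (y : Fin 3)) = max (f 0) (f 1) := by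
  haveI : Nonempty {y : Fin 3 // y ≠ 2} := ⟨⟨0, by decide⟩⟩
  apply le_antisymm
  · apply ciSup_le
    rintro ⟨y, hy⟩
    fin_cases y
    · exact le_max_left _ _
    · exact le_max_right _ _
    · exact absurd rfl hy
  · have hb : BddAbove (Set.range fun y : {y : Fin 3 // y ≠ 2} => f (y : Fin 3)) :=
      Set.Finite.bddAbove (Set.finite_range _)
    exact max_le (le_ciSup hb ⟨0, by decide⟩) (le_ciSup hb ⟨1, by decide⟩)

lemma gap_fin3 (D : Fin 3 → ℝ) :
    gap D = max (D 0 - max (D 1) (D 2))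
      (max (D 1 - max (D 0) (D 2)) (D 2 - max (D 0) (D 1))) := by
  unfold gap
  rw [fin3_ciSup (fun x => D x - ⨆ y : {y : Fin 3 // y ≠ x}, D (y : Fin 3))]
  simp only [sup_ne0, sup_ne1, sup_ne2]

lemma gap_eval (D : Fin 3 → ℝ) (a b c : ℝ) (h0 : D 0 = a) (h1 : D 1 = b) (h2 : D 2 = c)
    (hcb : c ≤ b) (hba : b ≤ a) : gap D = a - b := by
  rw [gap_fin3, h0, h1, h2, max_eq_left hcb, max_eq_left (hcb.trans hba), max_eq_left hba,
    max_eq_left (show c - a ≤ b - a by linarith),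
    max_eq_left (show b - a ≤ a - b by linarith)]

lemma gap_eval2 (D : Fin 3 → ℝ) (a b c : ℝ) (h0 : D 0 = a) (h1 : D 1 = c) (h2 : D 2 = b)
    (hcb : c ≤ b) (hba : b ≤ a) : gap D = a - b := by
  rw [gap_fin3, h0, h1, h2, max_eq_right hcb, max_eq_left hba, max_eq_left (hcb.trans hba),
    max_eq_right (show c - a ≤ b - a by linarith),
    max_eq_left (show b - a ≤ a - b by linarith)]

end aux

/-- **Lemma 5.1.** For every `0 < ε ≤ 1/5` there are two distributions on a
three-element option set (taken to be `Fin 3`, with `x = 0`), each with gap `ε`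
and unique most probable option `0`, whose uniform mixture has gap at least
`1/10`. -/
theorem stmt5 (ε : ℝ) (hε0 : 0 < ε) (hε1 : ε ≤ 1/5) :
    ∃ D₁ D₂ : Fin 3 → ℝ,
      (∀ x, 0 ≤ D₁ x) ∧ (∑ x, D₁ x = 1) ∧
      (∀ x, 0 ≤ D₂ x) ∧ (∑ x, D₂ x = 1) ∧
      gap D₁ = ε ∧ gap D₂ = ε ∧
      (∀ x, x ≠ 0 → D₁ 0 > D₁ x) ∧ (∀ x, x ≠ 0 → D₂ 0 > D₂ x) ∧
      gap (fun x => (D₁ x + D₂ x) / 2) ≥ 1/10 := by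
  refine ⟨![2/5 + ε, 2/5, 1/5 - ε], ![2/5 + ε, 1/5 - ε, 2/5], ?_, ?_, ?_, ?_, ?_, ?_, ?_, ?_, ?_⟩
  · intro x; fin_cases x <;> simp <;> linarith
  · simp [Fin.sum_univ_three]; ring
  · intro x; fin_cases x <;> simp <;> linarith
  · simp [Fin.sum_univ_three]; ring
  · rw [gap_eval _ (2/5 + ε) (2/5) (1/5 - ε) (by simp) (by simp) (by simp)
      (by linarith) (by linarith)]; ring
  · rw [gap_eval2 _ (2/5 + ε) (2/5) (1/5 - ε) (by simp) (by simp) (by simp)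
      (by linarith) (by linarith)]; ring
  · intro x hx; fin_cases x
    · exact absurd rfl hx
    · simp; linarith
    · simp; linarith
  · intro x hx; fin_cases x
    · exact absurd rfl hx
    · simp; linarith
    · simp; linarith
  · rw [gap_fin3]
    refine le_trans ?_ (le_max_left _ _)
    have h1 : ((![2/5 + ε, 2/5, 1/5 - ε] : Fin 3 → ℝ) 1 + (![2/5 + ε, 1/5 - ε, 2/5] : Fin 3 → ℝ) 1) / 2 = 3/10 - ε/2 := by
      simp only [Matrix.cons_val_one, Matrix.head_cons, Matrix.cons_val_zero]; ring
    have h2 : ((![2/5 + ε, 2/5, 1/5 - ε] : Fin 3 → ℝ) 2 + (![2/5 + ε, 1/5 - ε, 2/5] : Fin 3 → ℝ) 2) / 2 = 3/10 - ε/2 := by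
      simp only [Matrix.cons_val_two, Matrix.tail_cons, Matrix.head_cons]; ring
    have h0 : ((![2/5 + ε, 2/5, 1/5 - ε] : Fin 3 → ℝ) 0 + (![2/5 + ε, 1/5 - ε, 2/5] : Fin 3 → ℝ) 0) / 2 = 2/5 + ε := by
      simp only [Matrix.cons_val_zero]; ring
    simp only [h0, h1, h2, max_self]
    linarith
end

section
/- Let k ≥ 1, let τ : [0,1] → ℝ be a nonnegative concave function, let c_1, …, c_k > 0, let ε_1, …, ε_k ∈ [0,1], and let μ = (μ_1, …, μ_k) be a probability vector. Then (∑_i μ_i c_i) · τ(∑_i μ_i ε_i) ≥ min_i c_i τ(ε_i). -/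
/-- The core inequality in the proof of Lemma 5.2: for a nonnegative concave
function `τ` on `[0,1]`, positive costs `c i`, gaps `ε i ∈ [0,1]`, and a
probability vector `μ`, `(∑ i, μ i * c i) * τ(∑ i, μ i * ε i) ≥ min_i c i * τ(ε i)`. -/
theorem stmt7 (k : ℕ) (hk : 1 ≤ k) (τ : ℝ → ℝ)
    (hτ0 : ∀ x ∈ Set.Icc (0 : ℝ) 1, 0 ≤ τ x)
    (hτconc : ConcaveOn ℝ (Set.Icc (0 : ℝ) 1) τ)
    (c ε μ : Fin k → ℝ)
    (hc : ∀ i, 0 < c i) (hε : ∀ i, ε i ∈ Set.Icc (0 : ℝ) 1)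
    (hμ0 : ∀ i, 0 ≤ μ i) (hμ1 : ∑ i, μ i = 1) :
    Finset.univ.inf' (Finset.univ_nonempty_iff.mpr (Fin.pos_iff_nonempty.mp hk))
        (fun i => c i * τ (ε i))
      ≤ (∑ i, μ i * c i) * τ (∑ i, μ i * ε i) := by
  set m := Finset.univ.inf' (Finset.univ_nonempty_iff.mpr (Fin.pos_iff_nonempty.mp hk))
      (fun i => c i * τ (ε i)) with hm
  have hτi : ∀ i, 0 ≤ τ (ε i) := fun i => hτ0 _ (hε i)
  have hmle : ∀ i, m ≤ c i * τ (ε i) := fun i =>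
    Finset.inf'_le _ (Finset.mem_univ i)
  have hm0 : 0 ≤ m := by
    obtain ⟨i⟩ := Fin.pos_iff_nonempty.mp hk
    have := hmle i
    have : m ≤ c i * τ (ε i) := this
    -- m is min, but could be any value ≥ 0 since all terms ≥ 0
    have : ∃ j, m = c j * τ (ε j) := by
      obtain ⟨j, _, hj⟩ := Finset.exists_mem_eq_inf' (Finset.univ_nonempty_iff.mpr (Fin.pos_iff_nonempty.mp hk)) (fun i => c i * τ (ε i))
      exact ⟨j, hj⟩
    obtain ⟨j, hj⟩ := this
    rw [hj]
    exact mul_nonneg (hc j).le (hτi j)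
  -- Jensen: ∑ μ i * τ (ε i) ≤ τ (∑ μ i * ε i)
  have jensen : ∑ i, μ i * τ (ε i) ≤ τ (∑ i, μ i * ε i) := by
    have := hτconc.le_map_sum (t := Finset.univ) (w := μ) (p := ε)
      (fun i _ => hμ0 i) hμ1 (fun i _ => hε i)
    simpa [smul_eq_mul] using this
  have hτsum0 : 0 ≤ ∑ i, μ i * τ (ε i) :=
    Finset.sum_nonneg fun i _ => mul_nonneg (hμ0 i) (hτi i)
  have hcsum0 : 0 ≤ ∑ i, μ i * c i :=
    Finset.sum_nonneg fun i _ => mul_nonneg (hμ0 i) (hc i).le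
  -- Cauchy-Schwarz step: m ≤ (∑ μ c)(∑ μ τε)
  have key : m ≤ (∑ i, μ i * c i) * (∑ i, μ i * τ (ε i)) := by
    have h1 : Real.sqrt m ≤ ∑ i, Real.sqrt (μ i * c i) * Real.sqrt (μ i * τ (ε i)) := by
      calc Real.sqrt m = ∑ i, μ i * Real.sqrt m := by
            rw [← Finset.sum_mul, hμ1, one_mul]
        _ ≤ ∑ i, Real.sqrt (μ i * c i) * Real.sqrt (μ i * τ (ε i)) := by
            apply Finset.sum_le_sum
            intro i _
            rw [← Real.sqrt_mul (mul_nonneg (hμ0 i) (hc i).le)]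
            have : μ i * Real.sqrt m = Real.sqrt (μ i ^ 2 * m) := by
              rw [Real.sqrt_mul (sq_nonneg _), Real.sqrt_sq (hμ0 i)]
            rw [this]
            apply Real.sqrt_le_sqrt
            have : μ i * c i * (μ i * τ (ε i)) = μ i ^ 2 * (c i * τ (ε i)) := by ring
            rw [this]
            exact mul_le_mul_of_nonneg_left (hmle i) (sq_nonneg _)
    calc m = Real.sqrt m ^ 2 := (Real.sq_sqrt hm0).symm
      _ ≤ (∑ i, Real.sqrt (μ i * c i) * Real.sqrt (μ i * τ (ε i))) ^ 2 := by
          apply sq_le_sq' _ h1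
          linarith [Real.sqrt_nonneg m]
      _ ≤ (∑ i, Real.sqrt (μ i * c i) ^ 2) * (∑ i, Real.sqrt (μ i * τ (ε i)) ^ 2) := by
          exact Finset.sum_mul_sq_le_sq_mul_sq _ _ _
      _ = (∑ i, μ i * c i) * (∑ i, μ i * τ (ε i)) := by
          congr 1 <;> apply Finset.sum_congr rfl <;> intro i _
          · exact Real.sq_sqrt (mul_nonneg (hμ0 i) (hc i).le)
          · exact Real.sq_sqrt (mul_nonneg (hμ0 i) (hτi i))
  exact key.trans (mul_le_mul_of_nonneg_left jensen hcsum0)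
end

section
/- Let τ be a stopping time with respect to the natural filtration on the space {0,1}^ℕ of infinite bit sequences (so for each t, the event {τ = t} is determined by the first t coordinates), and suppose τ is symmetric: for each t, a sequence s belongs to the event {τ = t} if and only if the coordinatewise-flipped sequence s̄ (with every bit negated) belongs to {τ = t}. For p ∈ (1/2, 1] let μ_p denote the i.i.d. Bernoulli(p) product measure on {0,1}^ℕ. Suppose ρ ≥ 0 is such that for every p ∈ (1/2, 1], μ_p[ τ < ∞ and |{m ≤ τ : X_m = 1}| ≤ τ/2 ] ≤ ρ (i.e., under every biased coin the rule stops with the more probable value 1 failing to be a strict majority with probability at most ρ). Then under the fair-coin measure μ_{1/2}, the probability that τ is finite satisfies μ_{1/2}[ τ < ∞ ] ≤ 2ρ. -/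
open MeasureTheory ENNReal
/-- Number of `1`s (`true`s) among the first `t` bits of `ω`. -/
def countOnes (t : ℕ) (ω : ℕ → Bool) : ℕ :=
  ((Finset.range t).filter (fun m => ω m = true)).card

namespace Stmt12Aux

def cyl (t : ℕ) (s : Fin t → Bool) : Set (ℕ → Bool) :=
  {ω | ∀ m : Fin t, ω (m : ℕ) = s m}

def ext (t : ℕ) (s : Fin t → Bool) : ℕ → Bool :=
  fun n => if h : n < t then s ⟨n, h⟩ else false

lemma ext_agree (t : ℕ) (s : Fin t → Bool) : ∀ m : Fin t, ext t s (m : ℕ) = s m := by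
  intro m; simp [ext, m.isLt]

lemma measurable_cyl (t : ℕ) (s : Fin t → Bool) : MeasurableSet (cyl t s) := by
  have h : cyl t s = ⋂ m : Fin t, (fun ω : ℕ → Bool => ω (m : ℕ)) ⁻¹' {s m} := by
    ext ω; simp [cyl, Set.mem_iInter, Set.mem_preimage]
  rw [h]
  exact MeasurableSet.iInter fun m =>
    (measurable_pi_apply (m : ℕ)) (measurableSet_singleton (s m))

lemma cyl_disjoint {t : ℕ} {s s' : Fin t → Bool} (h : s ≠ s') :
    Disjoint (cyl t s) (cyl t s') := by
  rw [Set.disjoint_left]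
  intro ω h1 h2
  exact h (funext fun m => (h1 m).symm.trans (h2 m))

lemma countOnes_congr {t : ℕ} {ω ω' : ℕ → Bool} (h : ∀ m < t, ω m = ω' m) :
    countOnes t ω = countOnes t ω' := by
  unfold countOnes
  congr 1
  apply Finset.filter_congr
  intro m hm
  rw [Finset.mem_range] at hm
  simp [h m hm]

lemma countOnes_flip (t : ℕ) (ω : ℕ → Bool) :
    countOnes t (fun n => !(ω n)) + countOnes t ω = t := by
  have h : ((Finset.range t).filter (fun m => (!(ω m)) = true)) =
      ((Finset.range t).filter (fun m => ¬ (ω m = true))) := by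
    apply Finset.filter_congr; intro m _; simp
  unfold countOnes
  rw [h, Nat.add_comm, Finset.card_filter_add_card_filter_not, Finset.card_range]

def A (τ : (ℕ → Bool) → ℕ∞) (t : ℕ) : Finset (Fin t → Bool) :=
  Finset.univ.filter (fun s => τ (ext t s) = (t : ℕ∞))

def B (τ : (ℕ → Bool) → ℕ∞) (t : ℕ) : Finset (Fin t → Bool) :=
  Finset.univ.filter (fun s => τ (ext t s) = (t : ℕ∞) ∧ 2 * countOnes t (ext t s) ≤ t)


variable {τ : (ℕ → Bool) → ℕ∞}

lemma tau_set_eq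
    (hadapted : ∀ (t : ℕ) (ω ω' : ℕ → Bool),
      (∀ m < t, ω m = ω' m) → (τ ω = t ↔ τ ω' = t)) (t : ℕ) :
    {ω : ℕ → Bool | τ ω = (t : ℕ∞)} = ⋃ s ∈ A τ t, cyl t s := by
  ext ω
  simp only [Set.mem_setOf_eq, Set.mem_iUnion, A, Finset.mem_filter, Finset.mem_univ, true_and]
  constructor
  · intro h
    refine ⟨fun m => ω (m : ℕ), ?_, fun m => rfl⟩
    refine (hadapted t ω _ ?_).mp h
    intro m hm
    simp [ext, hm]
  · rintro ⟨s, hs, hmem⟩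
    refine (hadapted t (ext t s) ω ?_).mp hs
    intro m hm
    rw [hmem ⟨m, hm⟩]
    simp [ext, hm]

lemma err_set_eq
    (hadapted : ∀ (t : ℕ) (ω ω' : ℕ → Bool),
      (∀ m < t, ω m = ω' m) → (τ ω = t ↔ τ ω' = t)) (t : ℕ) :
    {ω : ℕ → Bool | τ ω = (t : ℕ∞) ∧ 2 * countOnes t ω ≤ t} = ⋃ s ∈ B τ t, cyl t s := by
  ext ω
  simp only [Set.mem_setOf_eq, Set.mem_iUnion, B, Finset.mem_filter, Finset.mem_univ, true_and]
  constructor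
  · rintro ⟨h1, h2⟩
    refine ⟨fun m => ω (m : ℕ), ⟨?_, ?_⟩, fun m => rfl⟩
    · refine (hadapted t ω _ ?_).mp h1
      intro m hm; simp [ext, hm]
    · rw [countOnes_congr (ω' := ω) (fun m hm => by simp [ext, hm])]
      exact h2
  · rintro ⟨s, ⟨hs1, hs2⟩, hmem⟩
    have hag : ∀ m < t, ext t s m = ω m := by
      intro m hm
      rw [hmem ⟨m, hm⟩]; simp [ext, hm]
    exact ⟨(hadapted t (ext t s) ω hag).mp hs1,
      by rw [← countOnes_congr hag]; exact hs2⟩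

lemma card_A_le
    (hadapted : ∀ (t : ℕ) (ω ω' : ℕ → Bool),
      (∀ m < t, ω m = ω' m) → (τ ω = t ↔ τ ω' = t))
    (hsym : ∀ (t : ℕ) (ω : ℕ → Bool), τ ω = t ↔ τ (fun n => !(ω n)) = t)
    (t : ℕ) : (A τ t).card ≤ 2 * (B τ t).card := by
  have hflip : ∀ s : Fin t → Bool, s ∈ A τ t → 2 * countOnes t (ext t s) > t →
      (fun m => !(s m)) ∈ B τ t := by
    intro s hs hc
    simp only [A, Finset.mem_filter, Finset.mem_univ, true_and] at hs
    have h1 : τ (fun n => !(ext t s n)) = (t : ℕ∞) := (hsym t (ext t s)).mp hs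
    have hag : ∀ m < t, (fun n => !(ext t s n)) m = ext t (fun m => !(s m)) m := by
      intro m hm; simp [ext, hm]
    have h2 : τ (ext t (fun m => !(s m))) = (t : ℕ∞) :=
      (hadapted t _ _ hag).mp h1
    have h3 : countOnes t (ext t (fun m => !(s m))) = countOnes t (fun n => !(ext t s n)) :=
      (countOnes_congr (fun m hm => (hag m hm).symm))
    have h4 := countOnes_flip t (ext t s)
    simp only [B, Finset.mem_filter, Finset.mem_univ, true_and]
    exact ⟨h2, by omega⟩
  have hsub : A τ t ⊆ B τ t ∪ (B τ t).image (fun s m => !(s m)) := by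
    intro s hs
    by_cases hc : 2 * countOnes t (ext t s) ≤ t
    · apply Finset.mem_union_left
      simp only [A, Finset.mem_filter, Finset.mem_univ, true_and] at hs
      simp only [B, Finset.mem_filter, Finset.mem_univ, true_and]
      exact ⟨hs, hc⟩
    · apply Finset.mem_union_right
      rw [Finset.mem_image]
      refine ⟨fun m => !(s m), hflip s hs (by omega), ?_⟩
      funext m; simp
  calc (A τ t).card ≤ (B τ t ∪ (B τ t).image (fun s m => !(s m))).card :=
        Finset.card_le_card hsub
    _ ≤ (B τ t).card + ((B τ t).image (fun s m => !(s m))).card := Finset.card_union_le _ _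
    _ ≤ (B τ t).card + (B τ t).card := by
        exact Nat.add_le_add_left (Finset.card_image_le) _
    _ = 2 * (B τ t).card := by ring

end Stmt12Aux

open Stmt12Aux in
/-- **Lemma 4.4 (LB-infty).** Let `P p` be the law of an i.i.d. Bernoulli(`p`)
bit sequence (characterized by its cylinder probabilities), and let `τ` be a
symmetric stopping time: for each `t`, the event `{τ = t}` depends only on the
first `t` bits and is invariant under flipping all bits. If for every
`p ∈ (1/2, 1]` the probability that the rule stops with the more probable
value `1` failing to be a strict majority is at most `ρ`, then under the fair
coin `p = 1/2` the rule stops in finite time with probability at most `2ρ`. -/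
theorem stmt12 (P : ℝ → Measure (ℕ → Bool))
    (hP : ∀ p : ℝ, 0 ≤ p → p ≤ 1 → ∀ (t : ℕ) (s : Fin t → Bool),
      P p {ω | ∀ m : Fin t, ω (m : ℕ) = s m}
        = ∏ m : Fin t, ENNReal.ofReal (if s m then p else 1 - p))
    (τ : (ℕ → Bool) → ℕ∞)
    (hadapted : ∀ (t : ℕ) (ω ω' : ℕ → Bool),
      (∀ m < t, ω m = ω' m) → (τ ω = t ↔ τ ω' = t))
    (hsym : ∀ (t : ℕ) (ω : ℕ → Bool), τ ω = t ↔ τ (fun n => !(ω n)) = t)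
    (ρ : ℝ) (hρ : 0 ≤ ρ)
    (herr : ∀ p : ℝ, 1 / 2 < p → p ≤ 1 →
      P p {ω | ∃ t : ℕ, τ ω = (t : ℕ∞) ∧ 2 * countOnes t ω ≤ t}
        ≤ ENNReal.ofReal ρ) :
    P (1 / 2) {ω | ∃ t : ℕ, τ ω = (t : ℕ∞)} ≤ ENNReal.ofReal (2 * ρ) := by
  classical
  set Sset : ℕ → Set (ℕ → Bool) := fun t => {ω | τ ω = (t : ℕ∞)} with hSset
  set Eset : ℕ → Set (ℕ → Bool) := fun t =>
    {ω | τ ω = (t : ℕ∞) ∧ 2 * countOnes t ω ≤ t} with hEset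
  -- cylinder measure
  have hcyl : ∀ p : ℝ, 0 ≤ p → p ≤ 1 → ∀ (t : ℕ) (s : Fin t → Bool),
      P p (cyl t s) = ENNReal.ofReal (∏ m : Fin t, if s m then p else 1 - p) := by
    intro p h0 h1 t s
    rw [show cyl t s = {ω | ∀ m : Fin t, ω (m : ℕ) = s m} from rfl, hP p h0 h1 t s,
      ← ENNReal.ofReal_prod_of_nonneg]
    intro m _
    by_cases h : s m <;> simp [h] <;> linarith
  have hterm_nonneg : ∀ p : ℝ, 0 ≤ p → p ≤ 1 → ∀ (t : ℕ) (s : Fin t → Bool),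
      0 ≤ ∏ m : Fin t, (if s m then p else 1 - p) := by
    intro p h0 h1 t s
    apply Finset.prod_nonneg
    intro m _
    by_cases h : s m <;> simp [h] <;> linarith
  have hPD : ∀ (t : ℕ) (C : Finset (Fin t → Bool)),
      Set.PairwiseDisjoint (↑C) (cyl t) := by
    intro t C s _ s' _ h
    exact cyl_disjoint h
  have hPC : ∀ p : ℝ, 0 ≤ p → p ≤ 1 → ∀ (t : ℕ) (C : Finset (Fin t → Bool)),
      P p (⋃ s ∈ C, cyl t s)
        = ∑ s ∈ C, ENNReal.ofReal (∏ m : Fin t, if s m then p else 1 - p) := by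
    intro p h0 h1 t C
    rw [measure_biUnion_finset (hPD t C) (fun s _ => measurable_cyl t s)]
    exact Finset.sum_congr rfl fun s _ => hcyl p h0 h1 t s
  have hE_meas : ∀ t, MeasurableSet (Eset t) := by
    intro t
    rw [hEset]
    simp only
    rw [err_set_eq hadapted t]
    exact (B τ t).measurableSet_biUnion (fun s _ => measurable_cyl t s)
  have hE_disj : Pairwise (Function.onFun Disjoint Eset) := by
    intro t t' h
    rw [Function.onFun, Set.disjoint_left]
    rintro ω ⟨h1, _⟩ ⟨h2, _⟩
    exact h (Nat.cast_injective (h1.symm.trans h2))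
  have hPE : ∀ p : ℝ, 0 ≤ p → p ≤ 1 → ∀ t : ℕ,
      P p (Eset t) = ∑ s ∈ B τ t,
        ENNReal.ofReal (∏ m : Fin t, if s m then p else 1 - p) := by
    intro p h0 h1 t
    rw [hEset]
    simp only
    rw [err_set_eq hadapted t, hPC p h0 h1 t]
  -- key claim: partial sums at p = 1/2 bounded by ρ
  have key : ∀ T : ℕ, ∑ t ∈ Finset.range T, P (1/2) (Eset t) ≤ ENNReal.ofReal ρ := by
    intro T
    set g : ℝ → ℝ := fun p => ∑ t ∈ Finset.range T, ∑ s ∈ B τ t,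
      ∏ m : Fin t, (if s m then p else 1 - p) with hg
    have hgcont : Continuous g := by
      apply continuous_finset_sum; intro t _
      apply continuous_finset_sum; intro s _
      apply continuous_finset_prod; intro m _
      by_cases h : s m
      · simp only [h, if_true]; exact continuous_id
      · simp only [h, if_false]; exact continuous_const.sub continuous_id
    have hofg : ∀ p : ℝ, 0 ≤ p → p ≤ 1 →
        ENNReal.ofReal (g p) = ∑ t ∈ Finset.range T, P p (Eset t) := by
      intro p h0 h1
      rw [hg]
      simp only
      rw [ENNReal.ofReal_sum_of_nonneg (fun t _ =>
        Finset.sum_nonneg fun s _ => hterm_nonneg p h0 h1 t s)]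
      refine Finset.sum_congr rfl fun t _ => ?_
      rw [ENNReal.ofReal_sum_of_nonneg (fun s _ => hterm_nonneg p h0 h1 t s),
        hPE p h0 h1 t]
    have hbound : ∀ p ∈ Set.Ioc (1/2 : ℝ) 1, g p ≤ ρ := by
      intro p hp
      have h0 : (0:ℝ) ≤ p := le_trans (by norm_num) (le_of_lt hp.1)
      have h1 : p ≤ 1 := hp.2
      have hineq : ENNReal.ofReal (g p) ≤ ENNReal.ofReal ρ := by
        rw [hofg p h0 h1]
        calc ∑ t ∈ Finset.range T, P p (Eset t)
            = P p (⋃ t ∈ Finset.range T, Eset t) := by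
              rw [measure_biUnion_finset
                (fun t _ t' _ h => hE_disj h) (fun t _ => hE_meas t)]
          _ ≤ P p {ω | ∃ t : ℕ, τ ω = (t : ℕ∞) ∧ 2 * countOnes t ω ≤ t} := by
              apply measure_mono
              intro ω hω
              simp only [Set.mem_iUnion] at hω
              obtain ⟨t, _, hω⟩ := hω
              exact ⟨t, hω⟩
          _ ≤ ENNReal.ofReal ρ := herr p hp.1 hp.2
      rwa [ENNReal.ofReal_le_ofReal_iff hρ] at hineq
    have hghalf : g (1/2) ≤ ρ := by
      have hne : Filter.NeBot (nhdsWithin (1/2 : ℝ) (Set.Ioc (1/2) 1)) := by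
        apply mem_closure_iff_nhdsWithin_neBot.mp
        rw [closure_Ioc (by norm_num : (1/2 : ℝ) ≠ 1)]
        constructor <;> norm_num
      exact le_of_tendsto (hgcont.continuousWithinAt)
        (eventually_nhdsWithin_of_forall hbound)
    calc ∑ t ∈ Finset.range T, P (1/2) (Eset t)
        = ENNReal.ofReal (g (1/2)) := (hofg (1/2) (by norm_num) (by norm_num)).symm
      _ ≤ ENNReal.ofReal ρ := ENNReal.ofReal_le_ofReal hghalf
  -- at p = 1/2, every cylinder has mass (1/2)^t
  have hval : ∀ (t : ℕ) (s : Fin t → Bool),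
      (∏ m : Fin t, (if s m then (1/2 : ℝ) else 1 - 1/2)) = (1/2)^t := by
    intro t s
    have h : ∀ m : Fin t, (if s m then (1/2:ℝ) else 1 - 1/2) = 1/2 := by
      intro m; by_cases h : s m <;> simp [h] <;> norm_num
    rw [Finset.prod_congr rfl (fun m _ => h m), Finset.prod_const, Finset.card_univ,
      Fintype.card_fin]
  have hS_le : ∀ t : ℕ, P (1/2) (Sset t) ≤ 2 * P (1/2) (Eset t) := by
    intro t
    have h0 : (0:ℝ) ≤ 1/2 := by norm_num
    have h1 : (1/2:ℝ) ≤ 1 := by norm_num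
    have hPS : P (1/2) (Sset t)
        = (A τ t).card * ENNReal.ofReal ((1/2)^t) := by
      rw [hSset]
      simp only
      rw [tau_set_eq hadapted t, hPC (1/2) h0 h1 t]
      rw [Finset.sum_congr rfl (fun s _ => by rw [hval t s]), Finset.sum_const,
        nsmul_eq_mul]
    have hPE2 : P (1/2) (Eset t)
        = (B τ t).card * ENNReal.ofReal ((1/2)^t) := by
      rw [hPE (1/2) h0 h1 t]
      rw [Finset.sum_congr rfl (fun s _ => by rw [hval t s]), Finset.sum_const,
        nsmul_eq_mul]
    rw [hPS, hPE2, ← mul_assoc]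
    apply mul_le_mul_left
    have := card_A_le hadapted hsym t
    calc ((A τ t).card : ℝ≥0∞) ≤ ((2 * (B τ t).card : ℕ) : ℝ≥0∞) := by
          exact_mod_cast this
      _ = 2 * (B τ t).card := by push_cast; ring
  -- conclusion
  have hS_meas : ∀ t, MeasurableSet (Sset t) := by
    intro t
    rw [hSset]
    simp only
    rw [tau_set_eq hadapted t]
    exact (A τ t).measurableSet_biUnion (fun s _ => measurable_cyl t s)
  have hS_disj : Pairwise (Function.onFun Disjoint Sset) := by
    intro t t' h
    rw [Function.onFun, Set.disjoint_left]
    intro ω h1 h2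
    simp only [hSset, Set.mem_setOf_eq] at h1 h2
    exact h (Nat.cast_injective (h1.symm.trans h2))
  have hunion : {ω : ℕ → Bool | ∃ t : ℕ, τ ω = (t : ℕ∞)} = ⋃ t : ℕ, Sset t := by
    ext ω
    simp [hSset]
  rw [hunion, measure_iUnion hS_disj hS_meas]
  have htsumE : ∑' t : ℕ, P (1/2) (Eset t) ≤ ENNReal.ofReal ρ := by
    rw [ENNReal.tsum_eq_iSup_sum]
    apply iSup_le
    intro I
    obtain ⟨T, hT⟩ := I.exists_nat_subset_range
    calc ∑ t ∈ I, P (1/2) (Eset t) ≤ ∑ t ∈ Finset.range T, P (1/2) (Eset t) :=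
          Finset.sum_le_sum_of_subset hT
      _ ≤ ENNReal.ofReal ρ := key T
  calc ∑' t : ℕ, P (1/2) (Sset t) ≤ ∑' t : ℕ, 2 * P (1/2) (Eset t) :=
        ENNReal.tsum_le_tsum hS_le
    _ = 2 * ∑' t : ℕ, P (1/2) (Eset t) := ENNReal.tsum_mul_left
    _ ≤ 2 * ENNReal.ofReal ρ := mul_le_mul_right htsumE 2
    _ = ENNReal.ofReal (2 * ρ) := by
        rw [ENNReal.ofReal_mul (by norm_num : (0:ℝ) ≤ 2)]
        norm_num
end
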